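/- Let S, c, C₁, C₂, P₀, K₁ ∈ ℝ and let Z : ℝ → ℝ be three times continuously differentiable with 0 < Z(r) < 1 for all r. Set α₀ = S·C₁², α₁ = C₂² − α₀, and suppose that Φ₁(r) = K₁ for all r, where Φ₁ = −(1/(2Z²(1−Z)²))·[2Z(1−Z)(α₁Z + α₀)Z″ + (α₀(1−2Z) − α₁Z²)(3 − (Z′)²) + 6(1−S)Z³(1−Z)²]. Define Ẑ(t,x) = Z(x−ct), v̂₁(t,x) = c + C₁/Z(x−ct), v̂₂(t,x) = c + C₂/(1−Z(x−ct)), and P̂(t,x) = P(x−ct) with P = P₀ + Z − (C₁²/(6Z²))(2ZZ″ − (Z′)² + 3). Then (Ẑ, v̂₁, v̂₂, P̂) solves the dimensionless Choi–Camassa system with parameter S at every point (t,x) ∈ ℝ². -/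

import Mathlib

/-- Partial derivative in the first (time) variable. -/
noncomputable def pdt (f : ℝ × ℝ → ℝ) (p : ℝ × ℝ) : ℝ := deriv (fun s => f (s, p.2)) p.1

/-- Partial derivative in the second (space) variable. -/
noncomputable def pdx (f : ℝ × ℝ → ℝ) (p : ℝ × ℝ) : ℝ := deriv (fun y => f (p.1, y)) p.2

/-- G_i = ∂ₜ∂ₓv + v ∂ₓ²v − (∂ₓv)². -/
noncomputable def Gpd (v : ℝ × ℝ → ℝ) (p : ℝ × ℝ) : ℝ :=
  pdt (pdx v) p + v p * pdx (pdx v) p - (pdx v p) ^ 2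

/-- The dimensionless Choi–Camassa system with density-ratio parameter `S`. -/
def CCsystem (S : ℝ) (Z v₁ v₂ P : ℝ × ℝ → ℝ) : Prop :=
  (∀ p : ℝ × ℝ, pdt Z p + pdx (fun q => Z q * v₁ q) p = 0) ∧
  (∀ p : ℝ × ℝ, pdt Z p + pdx (fun q => Z q * v₂ q) p - pdx v₂ p = 0) ∧
  (∀ p : ℝ × ℝ, pdt v₁ p + v₁ p * pdx v₁ p - pdx Z p + pdx P p
      - Z p * pdx Z p * Gpd v₁ p - (1/3) * (Z p) ^ 2 * pdx (Gpd v₁) p = 0) ∧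
  (∀ p : ℝ × ℝ, pdt v₂ p + v₂ p * pdx v₂ p - pdx Z p + S * pdx P p
      - (1/3) * (1 - Z p) ^ 2 * pdx (Gpd v₂) p + (1 - Z p) * pdx Z p * Gpd v₂ p = 0)

/-- The first integral Φ₁. -/
noncomputable def Phi1f (S α₀ α₁ : ℝ) (Z : ℝ → ℝ) : ℝ → ℝ := fun r =>
  -(1 / (2 * (Z r) ^ 2 * (1 - Z r) ^ 2)) *
    (2 * Z r * (1 - Z r) * (α₁ * Z r + α₀) * deriv (deriv Z) r
      + (α₀ * (1 - 2 * Z r) - α₁ * (Z r) ^ 2) * (3 - (deriv Z r) ^ 2)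
      + 6 * (1 - S) * (Z r) ^ 3 * (1 - Z r) ^ 2)

/-- Pressure integral P = P₀ + Z − (C₁²/(6Z²))(2ZZ″ − (Z′)² + 3). -/
noncomputable def Pf (P₀ C₁ : ℝ) (Z : ℝ → ℝ) : ℝ → ℝ := fun r =>
  P₀ + Z r - (C₁ ^ 2 / (6 * (Z r) ^ 2)) *
    (2 * Z r * deriv (deriv Z) r - (deriv Z r) ^ 2 + 3)

lemma pdx_comp (f : ℝ → ℝ) (c : ℝ) (p : ℝ × ℝ) (hf : DifferentiableAt ℝ f (p.2 - c * p.1)) :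
    pdx (fun q => f (q.2 - c * q.1)) p = deriv f (p.2 - c * p.1) := by
  have h : HasDerivAt (fun y => f (y - c * p.1)) (deriv f (p.2 - c * p.1) * 1) p.2 :=
    hf.hasDerivAt.comp p.2 ((hasDerivAt_id p.2).sub_const (c * p.1))
  simpa [pdx] using h.deriv

lemma pdt_comp (f : ℝ → ℝ) (c : ℝ) (p : ℝ × ℝ) (hf : DifferentiableAt ℝ f (p.2 - c * p.1)) :
    pdt (fun q => f (q.2 - c * q.1)) p = -(c * deriv f (p.2 - c * p.1)) := by
  have hin : HasDerivAt (fun s : ℝ => p.2 - c * s) (-(c * 1)) p.1 :=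
    ((hasDerivAt_id p.1).const_mul c).const_sub p.2
  have h : HasDerivAt (fun s : ℝ => f (p.2 - c * s)) (deriv f (p.2 - c * p.1) * -(c * 1)) p.1 :=
    hf.hasDerivAt.comp p.1 hin
  have := h.deriv
  simp only [pdt]
  rw [this]; ring

set_option maxHeartbeats 4000000 in
theorem stmt9 (S c C₁ C₂ P₀ K₁ : ℝ) (Z : ℝ → ℝ)
    (hZ : ContDiff ℝ 3 Z)
    (hrange : ∀ r : ℝ, 0 < Z r ∧ Z r < 1)
    (hΦ₁ : ∀ r : ℝ, Phi1f S (S * C₁ ^ 2) (C₂ ^ 2 - S * C₁ ^ 2) Z r = K₁) :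
    CCsystem S
      (fun p => Z (p.2 - c * p.1))
      (fun p => c + C₁ / Z (p.2 - c * p.1))
      (fun p => c + C₂ / (1 - Z (p.2 - c * p.1)))
      (fun p => Pf P₀ C₁ Z (p.2 - c * p.1)) := by
  have hZ3 : ContDiff ℝ ((2 : ℕ) + 1) Z := by exact_mod_cast hZ
  have h1 := contDiff_succ_iff_deriv.mp hZ3
  have hZd : Differentiable ℝ Z := h1.1
  have h2 := contDiff_succ_iff_deriv.mp
    (show ContDiff ℝ ((1 : ℕ) + 1) (deriv Z) by exact_mod_cast h1.2.2)
  have hDd : Differentiable ℝ (deriv Z) := h2.1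
  have hD2d : Differentiable ℝ (deriv (deriv Z)) := h2.2.2.differentiable (by simp)
  have hz0 : ∀ r, Z r ≠ 0 := fun r => ne_of_gt (hrange r).1
  have hu0 : ∀ r, (1 : ℝ) - Z r ≠ 0 := fun r => ne_of_gt (sub_pos.mpr (hrange r).2)
  -- first derivatives of the velocity profiles
  have hf1 : ∀ r, HasDerivAt (fun r => c + C₁ / Z r) (-(C₁ * deriv Z r) / Z r ^ 2) r := by
    intro r
    have h := ((hasDerivAt_const r C₁).div (hZd r).hasDerivAt (hz0 r)).const_add c
    refine h.congr_deriv (Eq.symm ?_)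
    ring
  have hdf1 : deriv (fun r : ℝ => c + C₁ / Z r) = fun r => -(C₁ * deriv Z r) / Z r ^ 2 :=
    deriv_eq hf1
  have hf2 : ∀ r, HasDerivAt (fun r => c + C₂ / (1 - Z r)) (C₂ * deriv Z r / (1 - Z r) ^ 2) r := by
    intro r
    have h := ((hasDerivAt_const r C₂).div ((hZd r).hasDerivAt.const_sub 1) (hu0 r)).const_add c
    refine h.congr_deriv (Eq.symm ?_)
    have hu := hu0 r
    field_simp
    ring
  have hdf2 : deriv (fun r : ℝ => c + C₂ / (1 - Z r)) = fun r => C₂ * deriv Z r / (1 - Z r) ^ 2 :=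
    deriv_eq hf2
  -- second derivatives
  have hF1 : ∀ r, HasDerivAt (fun r => -(C₁ * deriv Z r) / Z r ^ 2)
      (C₁ * (2 * deriv Z r ^ 2 - Z r * deriv (deriv Z) r) / Z r ^ 3) r := by
    intro r
    have h := (((hDd r).hasDerivAt.const_mul C₁).neg).div ((hZd r).hasDerivAt.pow 2)
      (pow_ne_zero 2 (hz0 r))
    refine h.congr_deriv (Eq.symm ?_)
    simp only [Pi.pow_apply, Pi.neg_apply, Pi.mul_apply, Pi.sub_apply, Pi.add_apply, Pi.div_apply]
    have hz := hz0 r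
    field_simp
    ring
  have hdF1 : deriv (fun r : ℝ => -(C₁ * deriv Z r) / Z r ^ 2)
      = fun r => C₁ * (2 * deriv Z r ^ 2 - Z r * deriv (deriv Z) r) / Z r ^ 3 := deriv_eq hF1
  have hH1 : ∀ r, HasDerivAt (fun r => C₂ * deriv Z r / (1 - Z r) ^ 2)
      (C₂ * ((1 - Z r) * deriv (deriv Z) r + 2 * deriv Z r ^ 2) / (1 - Z r) ^ 3) r := by
    intro r
    have h := ((hDd r).hasDerivAt.const_mul C₂).div (((hZd r).hasDerivAt.const_sub 1).pow 2)
      (pow_ne_zero 2 (hu0 r))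
    refine h.congr_deriv (Eq.symm ?_)
    simp only [Pi.pow_apply, Pi.neg_apply, Pi.mul_apply, Pi.sub_apply, Pi.add_apply, Pi.div_apply]
    have hu := hu0 r
    field_simp
    ring
  have hdH1 : deriv (fun r : ℝ => C₂ * deriv Z r / (1 - Z r) ^ 2)
      = fun r => C₂ * ((1 - Z r) * deriv (deriv Z) r + 2 * deriv Z r ^ 2) / (1 - Z r) ^ 3 :=
    deriv_eq hH1
  -- derivatives of the 1D profiles of G₁ and G₂
  have hG1 : ∀ r, HasDerivAt
      (fun r => C₁ ^ 2 * (deriv Z r ^ 2 - Z r * deriv (deriv Z) r) / Z r ^ 4)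
      (C₁ ^ 2 * (Z r * (deriv Z r * deriv (deriv Z) r - Z r * deriv (deriv (deriv Z)) r)
        - 4 * deriv Z r * (deriv Z r ^ 2 - Z r * deriv (deriv Z) r)) / Z r ^ 5) r := by
    intro r
    have h := ((((hDd r).hasDerivAt.pow 2).sub
      ((hZd r).hasDerivAt.mul (hD2d r).hasDerivAt)).const_mul (C₁ ^ 2)).div
      ((hZd r).hasDerivAt.pow 4) (pow_ne_zero 4 (hz0 r))
    refine h.congr_deriv (Eq.symm ?_)
    simp only [Pi.pow_apply, Pi.neg_apply, Pi.mul_apply, Pi.sub_apply, Pi.add_apply, Pi.div_apply]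
    have hz := hz0 r
    field_simp
    ring
  have hdG1 : deriv (fun r : ℝ => C₁ ^ 2 * (deriv Z r ^ 2 - Z r * deriv (deriv Z) r) / Z r ^ 4)
      = fun r => C₁ ^ 2 * (Z r * (deriv Z r * deriv (deriv Z) r - Z r * deriv (deriv (deriv Z)) r)
        - 4 * deriv Z r * (deriv Z r ^ 2 - Z r * deriv (deriv Z) r)) / Z r ^ 5 := deriv_eq hG1
  have hG2 : ∀ r, HasDerivAt
      (fun r => C₂ ^ 2 * ((1 - Z r) * deriv (deriv Z) r + deriv Z r ^ 2) / (1 - Z r) ^ 4)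
      (C₂ ^ 2 * ((1 - Z r) * (deriv Z r * deriv (deriv Z) r + (1 - Z r) * deriv (deriv (deriv Z)) r)
        + 4 * deriv Z r * ((1 - Z r) * deriv (deriv Z) r + deriv Z r ^ 2)) / (1 - Z r) ^ 5) r := by
    intro r
    have h := (((((hZd r).hasDerivAt.const_sub 1).mul (hD2d r).hasDerivAt).add
      ((hDd r).hasDerivAt.pow 2)).const_mul (C₂ ^ 2)).div
      (((hZd r).hasDerivAt.const_sub 1).pow 4) (pow_ne_zero 4 (hu0 r))
    refine h.congr_deriv (Eq.symm ?_)
    simp only [Pi.pow_apply, Pi.neg_apply, Pi.mul_apply, Pi.sub_apply, Pi.add_apply, Pi.div_apply]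
    have hu := hu0 r
    field_simp
    ring
  have hdG2 : deriv (fun r : ℝ => C₂ ^ 2 * ((1 - Z r) * deriv (deriv Z) r + deriv Z r ^ 2) / (1 - Z r) ^ 4)
      = fun r => C₂ ^ 2 * ((1 - Z r) * (deriv Z r * deriv (deriv Z) r
          + (1 - Z r) * deriv (deriv (deriv Z)) r)
        + 4 * deriv Z r * ((1 - Z r) * deriv (deriv Z) r + deriv Z r ^ 2)) / (1 - Z r) ^ 5 :=
    deriv_eq hG2
  -- derivative of the pressure profile
  have hP : ∀ r, HasDerivAt (Pf P₀ C₁ Z)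
      (deriv Z r - C₁ ^ 2 * (Z r ^ 2 * deriv (deriv (deriv Z)) r
        - deriv Z r * (2 * Z r * deriv (deriv Z) r - deriv Z r ^ 2 + 3)) / (3 * Z r ^ 3)) r := by
    intro r
    have hA := (hasDerivAt_const r (C₁ ^ 2)).div (((hZd r).hasDerivAt.pow 2).const_mul 6)
      (mul_ne_zero (by norm_num) (pow_ne_zero 2 (hz0 r)))
    have hB := ((((hZd r).hasDerivAt.const_mul 2).mul (hD2d r).hasDerivAt).sub
      ((hDd r).hasDerivAt.pow 2)).add_const (3 : ℝ)
    have h := ((hZd r).hasDerivAt.const_add P₀).sub (hA.mul hB)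
    unfold Pf
    refine h.congr_deriv (Eq.symm ?_)
    simp only [Pi.pow_apply, Pi.neg_apply, Pi.mul_apply, Pi.sub_apply, Pi.add_apply, Pi.div_apply]
    have hz := hz0 r
    field_simp
    ring
  -- derivative of the first integral Φ₁
  have hQ : ∀ r, HasDerivAt (Phi1f S (S * C₁ ^ 2) (C₂ ^ 2 - S * C₁ ^ 2) Z)
      ((3 * C₂ ^ 2 * deriv Z r * Z r ^ 3
        + 3 * (S - 1) * deriv Z r * Z r ^ 3 * (1 - Z r) ^ 3
        - S * C₁ ^ 2 * (1 - Z r) ^ 3 * (Z r ^ 2 * deriv (deriv (deriv Z)) r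
            - 2 * Z r * deriv Z r * deriv (deriv Z) r + deriv Z r ^ 3 - 3 * deriv Z r)
        - C₂ ^ 2 * Z r ^ 3 * ((1 - Z r) ^ 2 * deriv (deriv (deriv Z)) r
            + 2 * (1 - Z r) * deriv Z r * deriv (deriv Z) r + deriv Z r ^ 3))
        / (Z r ^ 3 * (1 - Z r) ^ 3)) r := by
    intro r
    have hden := (((hZd r).hasDerivAt.pow 2).const_mul 2).mul
      (((hZd r).hasDerivAt.const_sub 1).pow 2)
    have hne : 2 * Z r ^ 2 * (1 - Z r) ^ 2 ≠ 0 :=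
      mul_ne_zero (mul_ne_zero (by norm_num) (pow_ne_zero 2 (hz0 r))) (pow_ne_zero 2 (hu0 r))
    have hA := ((hasDerivAt_const r (1 : ℝ)).div hden hne).neg
    have hT1 := ((((hZd r).hasDerivAt.const_mul 2).mul ((hZd r).hasDerivAt.const_sub 1)).mul
      (((hZd r).hasDerivAt.const_mul (C₂ ^ 2 - S * C₁ ^ 2)).add_const (S * C₁ ^ 2))).mul
      (hD2d r).hasDerivAt
    have hT2 := (((((hZd r).hasDerivAt.const_mul 2).const_sub 1).const_mul (S * C₁ ^ 2)).sub
      (((hZd r).hasDerivAt.pow 2).const_mul (C₂ ^ 2 - S * C₁ ^ 2))).mul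
      (((hDd r).hasDerivAt.pow 2).const_sub 3)
    have hT3 := (((hZd r).hasDerivAt.pow 3).const_mul (6 * (1 - S))).mul
      (((hZd r).hasDerivAt.const_sub 1).pow 2)
    have h := hA.mul ((hT1.add hT2).add hT3)
    unfold Phi1f
    refine h.congr_deriv (Eq.symm ?_)
    simp only [Pi.pow_apply, Pi.neg_apply, Pi.mul_apply, Pi.sub_apply, Pi.add_apply, Pi.div_apply]
    have hz := hz0 r
    have hu := hu0 r
    field_simp
    ring
  -- the Gpd profiles
  have hpx1 : pdx (fun p : ℝ × ℝ => c + C₁ / Z (p.2 - c * p.1))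
      = fun p : ℝ × ℝ => -(C₁ * deriv Z (p.2 - c * p.1)) / Z (p.2 - c * p.1) ^ 2 := by
    funext p
    rw [pdx_comp (fun r => c + C₁ / Z r) c p (hf1 _).differentiableAt, hdf1]
  have hGpd1 : Gpd (fun p : ℝ × ℝ => c + C₁ / Z (p.2 - c * p.1))
      = fun p : ℝ × ℝ => C₁ ^ 2 * (deriv Z (p.2 - c * p.1) ^ 2
          - Z (p.2 - c * p.1) * deriv (deriv Z) (p.2 - c * p.1)) / Z (p.2 - c * p.1) ^ 4 := by
    funext p
    simp only [Gpd, hpx1]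
    rw [pdt_comp (fun r => -(C₁ * deriv Z r) / Z r ^ 2) c p (hF1 _).differentiableAt,
      pdx_comp (fun r => -(C₁ * deriv Z r) / Z r ^ 2) c p (hF1 _).differentiableAt, hdF1]
    have hz := hz0 (p.2 - c * p.1)
    field_simp
    ring
  have hpx2 : pdx (fun p : ℝ × ℝ => c + C₂ / (1 - Z (p.2 - c * p.1)))
      = fun p : ℝ × ℝ => C₂ * deriv Z (p.2 - c * p.1) / (1 - Z (p.2 - c * p.1)) ^ 2 := by
    funext p
    rw [pdx_comp (fun r => c + C₂ / (1 - Z r)) c p (hf2 _).differentiableAt, hdf2]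
  have hGpd2 : Gpd (fun p : ℝ × ℝ => c + C₂ / (1 - Z (p.2 - c * p.1)))
      = fun p : ℝ × ℝ => C₂ ^ 2 * ((1 - Z (p.2 - c * p.1)) * deriv (deriv Z) (p.2 - c * p.1)
          + deriv Z (p.2 - c * p.1) ^ 2) / (1 - Z (p.2 - c * p.1)) ^ 4 := by
    funext p
    simp only [Gpd, hpx2]
    rw [pdt_comp (fun r => C₂ * deriv Z r / (1 - Z r) ^ 2) c p (hH1 _).differentiableAt,
      pdx_comp (fun r => C₂ * deriv Z r / (1 - Z r) ^ 2) c p (hH1 _).differentiableAt, hdH1]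
    have hu := hu0 (p.2 - c * p.1)
    field_simp
    ring
  unfold CCsystem
  refine ⟨fun p => ?_, fun p => ?_, fun p => ?_, fun p => ?_⟩
  -- equation (i)
  · have e1 := pdt_comp Z c p (hZd _)
    have hm : ∀ r, HasDerivAt (fun r => Z r * (c + C₁ / Z r))
        (deriv Z r * (c + C₁ / Z r) + Z r * (-(C₁ * deriv Z r) / Z r ^ 2)) r :=
      fun r => (hZd r).hasDerivAt.mul (hf1 r)
    have e2 : pdx (fun q : ℝ × ℝ => Z (q.2 - c * q.1) * (c + C₁ / Z (q.2 - c * q.1))) p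
        = deriv Z (p.2 - c * p.1) * (c + C₁ / Z (p.2 - c * p.1))
          + Z (p.2 - c * p.1) * (-(C₁ * deriv Z (p.2 - c * p.1)) / Z (p.2 - c * p.1) ^ 2) := by
      rw [pdx_comp (fun r => Z r * (c + C₁ / Z r)) c p (hm _).differentiableAt, deriv_eq hm]
    beta_reduce
    rw [e1, e2]
    have hz := hz0 (p.2 - c * p.1)
    field_simp
    ring
  -- equation (ii)
  · have e1 := pdt_comp Z c p (hZd _)
    have hm : ∀ r, HasDerivAt (fun r => Z r * (c + C₂ / (1 - Z r)))
        (deriv Z r * (c + C₂ / (1 - Z r)) + Z r * (C₂ * deriv Z r / (1 - Z r) ^ 2)) r :=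
      fun r => (hZd r).hasDerivAt.mul (hf2 r)
    have e2 : pdx (fun q : ℝ × ℝ => Z (q.2 - c * q.1) * (c + C₂ / (1 - Z (q.2 - c * q.1)))) p
        = deriv Z (p.2 - c * p.1) * (c + C₂ / (1 - Z (p.2 - c * p.1)))
          + Z (p.2 - c * p.1) * (C₂ * deriv Z (p.2 - c * p.1) / (1 - Z (p.2 - c * p.1)) ^ 2) := by
      rw [pdx_comp (fun r => Z r * (c + C₂ / (1 - Z r))) c p (hm _).differentiableAt, deriv_eq hm]
    have e3 := congrFun hpx2 p
    beta_reduce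
    rw [e1, e2, e3]
    have hu := hu0 (p.2 - c * p.1)
    field_simp
    ring
  -- equation (iii)
  · have e1 := pdt_comp (fun r => c + C₁ / Z r) c p (hf1 _).differentiableAt
    rw [hdf1] at e1
    have e2 := congrFun hpx1 p
    have e3 := pdx_comp Z c p (hZd _)
    have e4 := pdx_comp (Pf P₀ C₁ Z) c p (hP _).differentiableAt
    rw [deriv_eq hP] at e4
    have e5 := congrFun hGpd1 p
    have e6 : pdx (Gpd fun p : ℝ × ℝ => c + C₁ / Z (p.2 - c * p.1)) p
        = C₁ ^ 2 * (Z (p.2 - c * p.1) * (deriv Z (p.2 - c * p.1)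
              * deriv (deriv Z) (p.2 - c * p.1)
              - Z (p.2 - c * p.1) * deriv (deriv (deriv Z)) (p.2 - c * p.1))
            - 4 * deriv Z (p.2 - c * p.1) * (deriv Z (p.2 - c * p.1) ^ 2
              - Z (p.2 - c * p.1) * deriv (deriv Z) (p.2 - c * p.1))) / Z (p.2 - c * p.1) ^ 5 := by
      rw [hGpd1,
        pdx_comp (fun r => C₁ ^ 2 * (deriv Z r ^ 2 - Z r * deriv (deriv Z) r) / Z r ^ 4) c p
          (hG1 _).differentiableAt, hdG1]
    beta_reduce
    rw [e1, e2, e3, e4, e5, e6]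
    have hz := hz0 (p.2 - c * p.1)
    field_simp
    ring
  -- equation (iv)
  · have e1 := pdt_comp (fun r => c + C₂ / (1 - Z r)) c p (hf2 _).differentiableAt
    rw [hdf2] at e1
    have e2 := congrFun hpx2 p
    have e3 := pdx_comp Z c p (hZd _)
    have e4 := pdx_comp (Pf P₀ C₁ Z) c p (hP _).differentiableAt
    rw [deriv_eq hP] at e4
    have e5 := congrFun hGpd2 p
    have e6 : pdx (Gpd fun p : ℝ × ℝ => c + C₂ / (1 - Z (p.2 - c * p.1))) p
        = C₂ ^ 2 * ((1 - Z (p.2 - c * p.1)) * (deriv Z (p.2 - c * p.1)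
              * deriv (deriv Z) (p.2 - c * p.1)
              + (1 - Z (p.2 - c * p.1)) * deriv (deriv (deriv Z)) (p.2 - c * p.1))
            + 4 * deriv Z (p.2 - c * p.1) * ((1 - Z (p.2 - c * p.1))
              * deriv (deriv Z) (p.2 - c * p.1) + deriv Z (p.2 - c * p.1) ^ 2))
          / (1 - Z (p.2 - c * p.1)) ^ 5 := by
      rw [hGpd2,
        pdx_comp (fun r => C₂ ^ 2 * ((1 - Z r) * deriv (deriv Z) r + deriv Z r ^ 2) / (1 - Z r) ^ 4)
          c p (hG2 _).differentiableAt, hdG2]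
    -- the first-integral relation at r
    have h0 : HasDerivAt (Phi1f S (S * C₁ ^ 2) (C₂ ^ 2 - S * C₁ ^ 2) Z) 0 (p.2 - c * p.1) := by
      have he : Phi1f S (S * C₁ ^ 2) (C₂ ^ 2 - S * C₁ ^ 2) Z = fun _ => K₁ := funext hΦ₁
      rw [he]; exact hasDerivAt_const _ K₁
    have key := (hQ (p.2 - c * p.1)).unique h0
    have hz := hz0 (p.2 - c * p.1)
    have hu := hu0 (p.2 - c * p.1)
    have hq : 3 * C₂ ^ 2 * deriv Z (p.2 - c * p.1) * Z (p.2 - c * p.1) ^ 3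
        + 3 * (S - 1) * deriv Z (p.2 - c * p.1) * Z (p.2 - c * p.1) ^ 3
            * (1 - Z (p.2 - c * p.1)) ^ 3
        - S * C₁ ^ 2 * (1 - Z (p.2 - c * p.1)) ^ 3
            * (Z (p.2 - c * p.1) ^ 2 * deriv (deriv (deriv Z)) (p.2 - c * p.1)
              - 2 * Z (p.2 - c * p.1) * deriv Z (p.2 - c * p.1)
                  * deriv (deriv Z) (p.2 - c * p.1)
              + deriv Z (p.2 - c * p.1) ^ 3 - 3 * deriv Z (p.2 - c * p.1))
        - C₂ ^ 2 * Z (p.2 - c * p.1) ^ 3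
            * ((1 - Z (p.2 - c * p.1)) ^ 2 * deriv (deriv (deriv Z)) (p.2 - c * p.1)
              + 2 * (1 - Z (p.2 - c * p.1)) * deriv Z (p.2 - c * p.1)
                  * deriv (deriv Z) (p.2 - c * p.1)
              + deriv Z (p.2 - c * p.1) ^ 3) = 0 := by
      rcases div_eq_zero_iff.mp key with h | h
      · exact h
      · exact absurd h (mul_ne_zero (pow_ne_zero 3 hz) (pow_ne_zero 3 hu))
    beta_reduce
    rw [e1, e2, e3, e4, e5, e6]
    rw [show (0 : ℝ) = (3 * C₂ ^ 2 * deriv Z (p.2 - c * p.1) * Z (p.2 - c * p.1) ^ 3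
        + 3 * (S - 1) * deriv Z (p.2 - c * p.1) * Z (p.2 - c * p.1) ^ 3
            * (1 - Z (p.2 - c * p.1)) ^ 3
        - S * C₁ ^ 2 * (1 - Z (p.2 - c * p.1)) ^ 3
            * (Z (p.2 - c * p.1) ^ 2 * deriv (deriv (deriv Z)) (p.2 - c * p.1)
              - 2 * Z (p.2 - c * p.1) * deriv Z (p.2 - c * p.1)
                  * deriv (deriv Z) (p.2 - c * p.1)
              + deriv Z (p.2 - c * p.1) ^ 3 - 3 * deriv Z (p.2 - c * p.1))
        - C₂ ^ 2 * Z (p.2 - c * p.1) ^ 3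
            * ((1 - Z (p.2 - c * p.1)) ^ 2 * deriv (deriv (deriv Z)) (p.2 - c * p.1)
              + 2 * (1 - Z (p.2 - c * p.1)) * deriv Z (p.2 - c * p.1)
                  * deriv (deriv Z) (p.2 - c * p.1)
              + deriv Z (p.2 - c * p.1) ^ 3))
        / (3 * Z (p.2 - c * p.1) ^ 3 * (1 - Z (p.2 - c * p.1)) ^ 3) by rw [hq]; simp]
    field_simp
    ring
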